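/- Let C : {0,1}^n → {0,1} be a monotonic collective decision making model on a set V of n actors. Then for every actor i ∈ V, SAT(i) = 2^{n-1} + BZ(i), where BZ is the Banzhaf value. -/
import Mathlib


open Finset

/-- The satisfaction score of actor `i` under a collective decision making
model `C : {0,1}^n → {0,1}`: the number of initial decision vectors `x`
for which the collective decision coincides with `x i`. -/
def SAT {n : ℕ} (C : (Fin n → Bool) → Bool) (i : Fin n) : ℕ :=
  (Finset.univ.filter (fun x : Fin n → Bool => C x = x i)).card

/-- The Banzhaf value of actor `i`: the number of coalitions `X` such that `X`
is winning but `X \ {i}` is not. -/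
def BZ {n : ℕ} (C : (Fin n → Bool) → Bool) (i : Fin n) : ℕ :=
  (Finset.univ.filter (fun X : Finset (Fin n) =>
    C (fun j => decide (j ∈ X)) = true ∧ C (fun j => decide (j ∈ X.erase i)) = false)).card

/-- For any monotonic collective decision making model `C` on `n` actors,
`SAT(i) = 2^(n-1) + BZ(i)` for every actor `i`. -/
theorem sat_eq_pow_add_banzhaf (n : ℕ) (C : (Fin n → Bool) → Bool)
    (hmono : ∀ x y : Fin n → Bool, (∀ j, x j ≤ y j) → C x ≤ C y)
    (i : Fin n) :
    SAT C i = 2 ^ (n - 1) + BZ C i := by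
  have hF0 : ∃ F0 : Finset (Fin n → Bool), F0 = univ.filter (fun x => x i = false) :=
    ⟨_, rfl⟩
  obtain ⟨F0, hF0⟩ := hF0
  have hmemF0 : ∀ x : Fin n → Bool, x ∈ F0 ↔ x i = false := by
    intro x; rw [hF0]; simp
  have swingdef : ∃ swing : Finset (Fin n → Bool),
      swing = F0.filter (fun x => C x = false ∧ C (Function.update x i true) = true) :=
    ⟨_, rfl⟩
  obtain ⟨swing, hswing⟩ := swingdef
  -- BZ equals the number of swing vectors
  have hBZ : BZ C i = swing.card := by
    rw [BZ, hswing, hF0, Finset.filter_filter]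
    apply Finset.card_bij (fun X _ => fun j => decide (j ∈ X.erase i))
    · intro X hX
      simp only [mem_filter, mem_univ, true_and] at hX ⊢
      obtain ⟨h1, h2⟩ := hX
      have hiX : i ∈ X := by
        by_contra hi
        rw [Finset.erase_eq_of_notMem hi] at h2
        rw [h1] at h2
        exact absurd h2 (by simp)
      have hupd : Function.update (fun j => decide (j ∈ X.erase i)) i true
          = fun j => decide (j ∈ X) := by
        funext j
        by_cases hj : j = i
        · subst hj; simp [hiX]
        · simp [Function.update_of_ne hj, Finset.mem_erase, hj]
      refine ⟨by simp, h2, ?_⟩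
      rw [hupd]; exact h1
    · intro X hX Y hY h
      simp only [mem_filter, mem_univ, true_and] at hX hY
      have hiX : i ∈ X := by
        by_contra hi
        rw [Finset.erase_eq_of_notMem hi] at hX
        rw [hX.1] at hX
        exact absurd hX.2 (by simp)
      have hiY : i ∈ Y := by
        by_contra hi
        rw [Finset.erase_eq_of_notMem hi] at hY
        rw [hY.1] at hY
        exact absurd hY.2 (by simp)
      have herase : X.erase i = Y.erase i := by
        ext j
        have hj := congrFun h j
        rw [decide_eq_decide] at hj
        rw [hj]
      calc X = insert i (X.erase i) := (Finset.insert_erase hiX).symm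
        _ = insert i (Y.erase i) := by rw [herase]
        _ = Y := Finset.insert_erase hiY
    · intro x hx
      simp only [mem_filter, mem_univ, true_and] at hx
      obtain ⟨hxi, hcx, hcu⟩ := hx
      refine ⟨insert i (univ.filter (fun j => x j = true)), ?_, ?_⟩
      · have hinotin : i ∉ univ.filter (fun j => x j = true) := by
          simp [hxi]
        have herase : (insert i (univ.filter (fun j => x j = true))).erase i
            = univ.filter (fun j => x j = true) := Finset.erase_insert hinotin
        have hind : (fun j => decide (j ∈ (insert i (univ.filter (fun j => x j = true))).erase i)) = x := by
          rw [herase]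
          funext j
          simp
        have hindX : (fun j => decide (j ∈ insert i (univ.filter (fun j => x j = true))))
            = Function.update x i true := by
          funext j
          by_cases hj : j = i
          · subst hj; simp
          · simp [Function.update_of_ne hj, hj]
        simp only [mem_filter, mem_univ, true_and]
        rw [hind, hindX]
        exact ⟨hcu, hcx⟩
      · have hinotin : i ∉ univ.filter (fun j => x j = true) := by
          simp [hxi]
        rw [Finset.erase_insert hinotin]
        funext j
        simp
  -- split SAT into two pieces
  have hT : ∃ T : Finset (Fin n → Bool), T = univ.filter (fun x => x i = true ∧ C x = true) :=
    ⟨_, rfl⟩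
  obtain ⟨T, hT⟩ := hT
  have hA : ∃ A : Finset (Fin n → Bool), A = F0.filter (fun x => C x = false) := ⟨_, rfl⟩
  obtain ⟨A, hA⟩ := hA
  have hsplit : SAT C i = T.card + A.card := by
    rw [SAT, hT, hA, hF0, Finset.filter_filter]
    have hu : univ.filter (fun x : Fin n → Bool => C x = x i)
        = univ.filter (fun x => x i = true ∧ C x = true)
          ∪ univ.filter (fun x => x i = false ∧ C x = false) := by
      ext x
      simp only [mem_union, mem_filter, mem_univ, true_and]
      cases hxi : x i <;> cases hcx : C x <;> simp [hxi, hcx]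
    rw [hu, Finset.card_union_of_disjoint]
    rw [Finset.disjoint_left]
    intro a ha hb
    simp only [mem_filter, mem_univ, true_and] at ha hb
    rw [ha.1] at hb
    exact absurd hb.1 (by simp)
  -- T is in bijection with T' : x with x i = false and C (update x i true) = true
  have hT'e : ∃ T' : Finset (Fin n → Bool),
      T' = F0.filter (fun x => C (Function.update x i true) = true) := ⟨_, rfl⟩
  obtain ⟨T', hT'⟩ := hT'e
  have hTT' : T.card = T'.card := by
    rw [hT, hT', hF0, Finset.filter_filter]
    refine Finset.card_bij' (fun x _ => Function.update x i false)
      (fun x _ => Function.update x i true) ?_ ?_ ?_ ?_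
    · intro x hx
      simp only [mem_filter, mem_univ, true_and] at hx ⊢
      obtain ⟨hxi, hcx⟩ := hx
      have h1 : Function.update (Function.update x i false) i true = x := by
        rw [Function.update_idem, ← hxi, Function.update_eq_self]
      refine ⟨by simp, ?_⟩
      rw [h1]; exact hcx
    · intro x hx
      simp only [mem_filter, mem_univ, true_and] at hx ⊢
      obtain ⟨hxi, hcu⟩ := hx
      exact ⟨by simp, hcu⟩
    · intro x hx
      simp only [mem_filter, mem_univ, true_and] at hx
      show Function.update (Function.update x i false) i true = x
      rw [Function.update_idem, ← hx.1, Function.update_eq_self]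
    · intro x hx
      simp only [mem_filter, mem_univ, true_and] at hx
      show Function.update (Function.update x i true) i false = x
      rw [Function.update_idem, ← hx.1, Function.update_eq_self]
  -- counting: T'.card + A.card = F0.card + swing.card
  have hcount : T'.card + A.card = F0.card + swing.card := by
    have h1 : T'.card = ∑ x ∈ F0, (if C (Function.update x i true) = true then 1 else 0) := by
      rw [hT']; exact Finset.card_filter _ _
    have h2 : A.card = ∑ x ∈ F0, (if C x = false then 1 else 0) := by
      rw [hA]; exact Finset.card_filter _ _
    have h3 : swing.card
        = ∑ x ∈ F0, (if C x = false ∧ C (Function.update x i true) = true then 1 else 0) := by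
      rw [hswing]; exact Finset.card_filter _ _
    have h4 : F0.card = ∑ _x ∈ F0, 1 := Finset.card_eq_sum_ones F0
    rw [h1, h2, h3, h4, ← Finset.sum_add_distrib, ← Finset.sum_add_distrib]
    apply Finset.sum_congr rfl
    intro x hx
    rw [hmemF0] at hx
    have hle : C x ≤ C (Function.update x i true) := by
      apply hmono
      intro j
      by_cases hj : j = i
      · subst hj; simp
      · simp [Function.update_of_ne hj]
    cases hcx : C x <;> cases hcu : C (Function.update x i true) <;>
      simp [hcx, hcu] at hle ⊢ <;> exact absurd hle (by decide)
  -- F0.card = 2^(n-1)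
  have hF0card : F0.card = 2 ^ (n - 1) := by
    have hbij : F0.card = (univ.filter (fun x : Fin n → Bool => x i = true)).card := by
      rw [hF0]
      refine Finset.card_bij' (fun x _ => Function.update x i true)
        (fun x _ => Function.update x i false) ?_ ?_ ?_ ?_
      · intro x hx; simp
      · intro x hx; simp
      · intro x hx
        simp only [mem_filter, mem_univ, true_and] at hx
        show Function.update (Function.update x i true) i false = x
        rw [Function.update_idem, ← hx, Function.update_eq_self]
      · intro x hx
        simp only [mem_filter, mem_univ, true_and] at hx
        show Function.update (Function.update x i false) i true = x
        rw [Function.update_idem, ← hx, Function.update_eq_self]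
    have heq : (univ.filter (fun x : Fin n → Bool => ¬ x i = false))
        = univ.filter (fun x => x i = true) := by
      ext x; simp [Bool.not_eq_false]
    have htot := Finset.card_filter_add_card_filter_not
      (s := (univ : Finset (Fin n → Bool))) (p := fun x => x i = false)
    rw [heq, ← hF0, ← hbij, Finset.card_univ] at htot
    have hcard : Fintype.card (Fin n → Bool) = 2 ^ n := by simp
    rw [hcard] at htot
    have hn : n - 1 + 1 = n := Nat.succ_pred_eq_of_pos i.pos
    have h2 : 2 ^ n = 2 ^ (n - 1) * 2 := by rw [← pow_succ, hn]
    have hm : 2 * F0.card = 2 * 2 ^ (n - 1) := by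
      rw [two_mul, htot, h2]
      exact Nat.mul_comm _ _
    exact Nat.eq_of_mul_eq_mul_left (by norm_num) hm
  rw [hsplit, hTT', hBZ, hcount, hF0card]
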